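/- Let p be a prime with p ≡ 5 (mod 6) and let k be a field of characteristic p. In k[X₁,X₂,X₃,X₄], let κ = X₂²X₄² − 4X₁X₃X₄² + 4X₁³X₄ − 4X₃³X₄ + 4X₁²X₃² − 8X₁X₂²X₃ + 4X₂⁴. Then the coefficient of X₁^{p−1}X₃^{2(p−1)}X₄^{p−1} in κ^{p−1} is zero, and the coefficient of X₁^{2(p−1)}X₃^{p−1}X₄^{p−1} in κ^{p−1} is zero. -/

import Mathlib

open MvPolynomial

noncomputable section Stmt3

/-- Exponent vector `(i₁,i₂,i₃,i₄)` for the variables `X₁,X₂,X₃,X₄`. -/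
def expv (i1 i2 i3 i4 : ℕ) : Fin 4 →₀ ℕ := Finsupp.equivFunOnFinite.symm ![i1, i2, i3, i4]

variable (k : Type*) [Field k]

/-- The Kummer quartic surface `κ` of the genus-2 curve `z² = x⁶ − 1`, in the variables
`X₁ = X 0, X₂ = X 1, X₃ = X 2, X₄ = X 3` over `k`. -/
def kappaK : MvPolynomial (Fin 4) k :=
  X 1 ^ 2 * X 3 ^ 2 - 4 * X 0 * X 2 * X 3 ^ 2 + 4 * X 0 ^ 3 * X 3 - 4 * X 2 ^ 3 * X 3
    + 4 * X 0 ^ 2 * X 2 ^ 2 - 8 * X 0 * X 1 ^ 2 * X 2 + 4 * X 1 ^ 4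

/-- The mod-3 weight: `X₁ ↦ 1, X₂ ↦ 0, X₃ ↦ 2, X₄ ↦ 0`. -/
def w3 : Fin 4 → ZMod 3 := ![1, 0, 2, 0]

lemma whom_neg {σ R M : Type*} [CommRing R] [AddCommMonoid M] {w : σ → M}
    {φ : MvPolynomial σ R} {n : M} (h : φ.IsWeightedHomogeneous w n) :
    (-φ).IsWeightedHomogeneous w n := by
  intro d hd
  apply h
  simpa using hd

lemma whom_sub {σ R M : Type*} [CommRing R] [AddCommMonoid M] {w : σ → M}
    {φ ψ : MvPolynomial σ R} {n : M} (h : φ.IsWeightedHomogeneous w n)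
    (h' : ψ.IsWeightedHomogeneous w n) : (φ - ψ).IsWeightedHomogeneous w n := by
  rw [sub_eq_add_neg]
  exact h.add (whom_neg h')

lemma whom_pow {σ R M : Type*} [CommRing R] [AddCommMonoid M] {w : σ → M}
    {φ : MvPolynomial σ R} {n : M} (h : φ.IsWeightedHomogeneous w n) (m : ℕ) :
    (φ ^ m).IsWeightedHomogeneous w (m • n) := by
  induction m with
  | zero => simpa using isWeightedHomogeneous_one _ _
  | succ m ih =>
      rw [pow_succ, succ_nsmul]
      exact ih.mul h

lemma whom_X_pow {σ R M : Type*} [CommRing R] [AddCommMonoid M] (w : σ → M)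
    (i : σ) (m : ℕ) : ((X i : MvPolynomial σ R) ^ m).IsWeightedHomogeneous w (m • w i) :=
  whom_pow (isWeightedHomogeneous_X _ _ _) m

lemma whom_num {σ R M : Type*} [CommRing R] [AddCommMonoid M] (w : σ → M)
    (r : ℕ) : ((r : MvPolynomial σ R)).IsWeightedHomogeneous w 0 := by
  have : ((r : MvPolynomial σ R)) = C (r : R) := by
    simp [map_natCast]
  rw [this]
  exact isWeightedHomogeneous_C _ _

lemma kappa_whom : (kappaK k).IsWeightedHomogeneous w3 0 := by
  have hX0 := isWeightedHomogeneous_X (R := k) w3 (0 : Fin 4)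
  have hX1 := isWeightedHomogeneous_X (R := k) w3 (1 : Fin 4)
  have hX2 := isWeightedHomogeneous_X (R := k) w3 (2 : Fin 4)
  have hX3 := isWeightedHomogeneous_X (R := k) w3 (3 : Fin 4)
  have w0 : w3 (0 : Fin 4) = 1 := rfl
  have w1 : w3 (1 : Fin 4) = 0 := rfl
  have w2 : w3 (2 : Fin 4) = 2 := rfl
  have w3' : w3 (3 : Fin 4) = 0 := rfl
  unfold kappaK
  have t1 : ((X 1 : MvPolynomial (Fin 4) k) ^ 2 * X 3 ^ 2).IsWeightedHomogeneous w3 0 := by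
    have := (whom_X_pow (R := k) w3 1 2).mul (whom_X_pow (R := k) w3 3 2)
    convert this using 1
    all_goals rfl
  have t2 : ((4 : MvPolynomial (Fin 4) k) * X 0 * X 2 * X 3 ^ 2).IsWeightedHomogeneous w3 0 := by
    have := (((whom_num (R := k) w3 4).mul hX0).mul hX2).mul (whom_X_pow (R := k) w3 3 2)
    convert this using 1
    all_goals rfl
  have t3 : ((4 : MvPolynomial (Fin 4) k) * X 0 ^ 3 * X 3).IsWeightedHomogeneous w3 0 := by
    have := ((whom_num (R := k) w3 4).mul (whom_X_pow (R := k) w3 0 3)).mul hX3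
    convert this using 1
    all_goals rfl
  have t4 : ((4 : MvPolynomial (Fin 4) k) * X 2 ^ 3 * X 3).IsWeightedHomogeneous w3 0 := by
    have := ((whom_num (R := k) w3 4).mul (whom_X_pow (R := k) w3 2 3)).mul hX3
    convert this using 1
    all_goals rfl
  have t5 : ((4 : MvPolynomial (Fin 4) k) * X 0 ^ 2 * X 2 ^ 2).IsWeightedHomogeneous w3 0 := by
    have := ((whom_num (R := k) w3 4).mul (whom_X_pow (R := k) w3 0 2)).mul
      (whom_X_pow (R := k) w3 2 2)
    convert this using 1
    all_goals rfl
  have t6 : ((8 : MvPolynomial (Fin 4) k) * X 0 * X 1 ^ 2 * X 2).IsWeightedHomogeneous w3 0 := by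
    have := (((whom_num (R := k) w3 8).mul hX0).mul (whom_X_pow (R := k) w3 1 2)).mul hX2
    convert this using 1
    all_goals rfl
  have t7 : ((4 : MvPolynomial (Fin 4) k) * X 1 ^ 4).IsWeightedHomogeneous w3 0 := by
    have := (whom_num (R := k) w3 4).mul (whom_X_pow (R := k) w3 1 4)
    convert this using 1
    all_goals rfl
  exact (whom_sub ((whom_sub ((whom_sub t1 t2).add t3) t4).add t5) t6).add t7

lemma weight_expv (i1 i2 i3 i4 : ℕ) :
    Finsupp.weight w3 (expv i1 i2 i3 i4)
      = (i1 : ZMod 3) * 1 + (i3 : ZMod 3) * 2 := by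
  rw [Finsupp.weight_apply, expv]
  rw [Finsupp.sum_fintype _ _ (by intro i; simp)]
  simp [Fin.sum_univ_four, w3, Finsupp.equivFunOnFinite, nsmul_eq_mul]
  rfl

/-- For `p ≡ 5 (mod 6)` prime and `k` of characteristic `p`, the
coefficients of `X₁^{p−1}X₃^{2(p−1)}X₄^{p−1}` and `X₁^{2(p−1)}X₃^{p−1}X₄^{p−1}` in
`κ^{p−1}` both vanish. -/
theorem stmt3 (p : ℕ) (hp : p.Prime) (hp5 : p % 6 = 5) [CharP k p] :
    coeff (expv (p - 1) 0 (2 * (p - 1)) (p - 1)) ((kappaK k) ^ (p - 1)) = 0 ∧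
    coeff (expv (2 * (p - 1)) 0 (p - 1) (p - 1)) ((kappaK k) ^ (p - 1)) = 0 := by
  have hpow : ((kappaK k) ^ (p - 1)).IsWeightedHomogeneous w3 0 := by
    have := whom_pow (kappa_whom k) (p - 1)
    simpa using this
  have hp3 : p % 3 = 2 := by omega
  have hp1 : 1 ≤ p := hp.one_le
  have hcast : ((p - 1 : ℕ) : ZMod 3) = 1 := by
    have hpz : (p : ZMod 3) = 2 := by
      rw [← Nat.mod_add_div p 3, hp3]
      push_cast
      simp [show (3 : ZMod 3) = 0 from rfl]
    rw [Nat.cast_sub hp1, hpz, Nat.cast_one]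
    decide
  constructor
  · apply hpow.coeff_eq_zero
    rw [weight_expv]
    push_cast [hcast]
    decide
  · apply hpow.coeff_eq_zero
    rw [weight_expv]
    push_cast [hcast]
    decide

end Stmt3
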